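/- Let w_j, w_k, w_l, w_m, m_α, m_β be nonzero complex numbers and set A = w_m/(m_β·w_j), F = w_l/(m_α·w_m), C = (w_j·w_l)/(w_m·w_k). Assume ‖A‖ < 1, ‖F‖ < 1, ‖C‖ < 1, and that A is not a nonpositive real number. Define f : ℂ → ℂ by f(w) = Li₂(w/(m_β·w_j)) + Li₂(w_k/(m_α·w_j)) − Li₂(w_l/(m_β·w_k)) − Li₂(w_l/(m_α·w)) + Li₂((w_j·w_l)/(w·w_k)) − π²/6 + log(w/(m_β·w_j))·log(w_k/(m_α·w_j)). Then f has derivative D at w_m, where D = (1/w_m)·(−log(1−A) − log(1−F) + log(1−C) + log(w_k/(m_α·w_j))), and moreover exp(w_m·D) = (w_j·w_l − w_k·w_m)/(((1/m_β)·w_m − w_j)·(m_α·w_m − w_l)). -/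

import Mathlib

/-- The dilogarithm, defined by the power series `Li₂(z) = ∑_{n ≥ 1} zⁿ / n²`. -/
noncomputable def Li2 (z : ℂ) : ℂ := ∑' n : ℕ, z ^ (n + 1) / ((n : ℂ) + 1) ^ 2

private lemma hasSum_deriv_Li2 {z : ℂ} (hz : ‖z‖ < 1) (hz0 : z ≠ 0) :
    HasSum (fun n : ℕ => z ^ n / ((n : ℂ) + 1)) (-Complex.log (1 - z) / z) := by
  have h0 := Complex.hasSum_taylorSeries_neg_log hz
  have h1 : HasSum (fun n : ℕ => z ^ (n + 1) / (((n + 1 : ℕ)) : ℂ)) (-Complex.log (1 - z)) := by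
    rw [hasSum_nat_add_iff (f := fun n : ℕ => z ^ n / (n : ℂ)) 1]
    simpa using h0
  push_cast at h1
  have h2 := h1.mul_left z⁻¹
  have heq : (fun n : ℕ => z⁻¹ * (z ^ (n + 1) / ((n : ℂ) + 1)))
      = fun n : ℕ => z ^ n / ((n : ℂ) + 1) := by
    funext n
    rw [pow_succ]
    field_simp
  rw [heq] at h2
  convert h2 using 1
  · rfl
  ring

private lemma hasDerivAt_Li2 {z : ℂ} (hz : ‖z‖ < 1) (hz0 : z ≠ 0) :
    HasDerivAt Li2 (-Complex.log (1 - z) / z) z := by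
  set r : ℝ := (1 + ‖z‖) / 2 with hr
  have hr0 : 0 ≤ r := by positivity
  have hr1 : r < 1 := by simp only [hr]; linarith
  have hzr : ‖z‖ < r := by simp only [hr]; linarith
  have hrpos : 0 < r := lt_of_le_of_lt (norm_nonneg z) hzr
  have key := hasDerivAt_tsum_of_isPreconnected
    (u := fun n : ℕ => r ^ n)
    (g := fun (n : ℕ) (w : ℂ) => w ^ (n + 1) / ((n : ℂ) + 1) ^ 2)
    (g' := fun (n : ℕ) (w : ℂ) => w ^ n / ((n : ℂ) + 1))
    (summable_geometric_of_lt_one hr0 hr1)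
    (Metric.isOpen_ball (x := (0 : ℂ)) (ε := r))
    ((convex_ball (0 : ℂ) r).isPreconnected)
    (fun n w _ => by
      have h := (hasDerivAt_pow (n + 1) w).div_const (((n : ℂ) + 1) ^ 2)
      have hn : ((n : ℂ) + 1) ≠ 0 := Nat.cast_add_one_ne_zero n
      convert h using 1
      · rfl
      push_cast
      field_simp)
    (fun n w hw => by
      have hw' : ‖w‖ ≤ r := le_of_lt (by simpa using hw)
      have h1 : (1 : ℝ) ≤ ‖((n : ℂ) + 1)‖ := by
        have : ((n : ℂ) + 1) = ((n + 1 : ℕ) : ℂ) := by push_cast; ring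
        rw [this, Complex.norm_natCast]
        exact_mod_cast Nat.one_le_iff_ne_zero.mpr (Nat.succ_ne_zero n)
      calc ‖w ^ n / ((n : ℂ) + 1)‖ = ‖w‖ ^ n / ‖((n : ℂ) + 1)‖ := by
            rw [norm_div, norm_pow]
        _ ≤ r ^ n / 1 := by
            gcongr
        _ = r ^ n := div_one _)
    (Metric.mem_ball_self hrpos)
    (by
      have : (fun n : ℕ => (0 : ℂ) ^ (n + 1) / ((n : ℂ) + 1) ^ 2) = fun _ => (0 : ℂ) := by
        funext n; simp
      rw [this]; exact summable_zero)
    (by simpa using hzr)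
  have hV := (hasSum_deriv_Li2 hz hz0).tsum_eq
  rw [hV] at key
  exact key

/-- The crossing potential of a positive crossing, viewed as a function of the
region variable `w_m`, has derivative `D` at `w_m`, and `exp (w_m * D) = τ_{c,m}`. -/
theorem crossing_potential_deriv_wm_pos
    (wj wk wl wm mα mβ : ℂ)
    (hwj : wj ≠ 0) (hwk : wk ≠ 0) (hwl : wl ≠ 0) (hwm : wm ≠ 0)
    (hmα : mα ≠ 0) (hmβ : mβ ≠ 0)
    (A F C D : ℂ)
    (hA : A = wm / (mβ * wj)) (hF : F = wl / (mα * wm))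
    (hC : C = (wj * wl) / (wm * wk))
    (hAnorm : ‖A‖ < 1) (hFnorm : ‖F‖ < 1) (hCnorm : ‖C‖ < 1)
    (hAreal : ∀ r : ℝ, r ≤ 0 → (r : ℂ) ≠ A)
    (hD : D = (1 / wm) * (-Complex.log (1 - A) - Complex.log (1 - F) + Complex.log (1 - C)
      + Complex.log (wk / (mα * wj)))) :
    HasDerivAt (fun w : ℂ =>
      Li2 (w / (mβ * wj)) + Li2 (wk / (mα * wj)) - Li2 (wl / (mβ * wk)) - Li2 (wl / (mα * w))
        + Li2 ((wj * wl) / (w * wk)) - (Real.pi : ℂ) ^ 2 / 6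
        + Complex.log (w / (mβ * wj)) * Complex.log (wk / (mα * wj))) D wm ∧
    Complex.exp (wm * D) =
      (wj * wl - wk * wm) / (((1 / mβ) * wm - wj) * (mα * wm - wl)) := by
  have hA0 : A ≠ 0 := by
    rw [hA]; exact div_ne_zero hwm (mul_ne_zero hmβ hwj)
  have hF0 : F ≠ 0 := by
    rw [hF]; exact div_ne_zero hwl (mul_ne_zero hmα hwm)
  have hC0 : C ≠ 0 := by
    rw [hC]; exact div_ne_zero (mul_ne_zero hwj hwl) (mul_ne_zero hwm hwk)
  have h1A : (1 : ℂ) - A ≠ 0 := by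
    intro h
    have : A = 1 := by linear_combination -h
    rw [this] at hAnorm; simp at hAnorm
  have h1F : (1 : ℂ) - F ≠ 0 := by
    intro h
    have : F = 1 := by linear_combination -h
    rw [this] at hFnorm; simp at hFnorm
  have h1C : (1 : ℂ) - C ≠ 0 := by
    intro h
    have : C = 1 := by linear_combination -h
    rw [this] at hCnorm; simp at hCnorm
  -- membership of A in the slit plane
  have hslit : A ∈ Complex.slitPlane := by
    rw [Complex.mem_slitPlane_iff]
    by_contra h
    push_neg at h
    obtain ⟨h1, h2⟩ := h
    refine hAreal A.re h1 ?_
    exact (Complex.ext (by simp) (by simp [h2])).symm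
  -- inner derivatives
  have hin1 : HasDerivAt (fun w : ℂ => w / (mβ * wj)) (1 / (mβ * wj)) wm := by
    simpa using (hasDerivAt_id wm).div_const (mβ * wj)
  have hmw : mα * wm ≠ 0 := mul_ne_zero hmα hwm
  have hwmk : wm * wk ≠ 0 := mul_ne_zero hwm hwk
  have hmul1 : HasDerivAt (fun w : ℂ => mα * w) mα wm := by
    simpa using (hasDerivAt_id wm).const_mul mα
  have hin4 : HasDerivAt (fun w : ℂ => wl / (mα * w))
      ((0 * (mα * wm) - wl * mα) / (mα * wm) ^ 2) wm := by
    exact (hasDerivAt_const wm wl).div hmul1 hmw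
  have hmul2 : HasDerivAt (fun w : ℂ => w * wk) wk wm := by
    simpa using (hasDerivAt_id wm).mul_const wk
  have hin5 : HasDerivAt (fun w : ℂ => (wj * wl) / (w * wk))
      ((0 * (wm * wk) - (wj * wl) * wk) / (wm * wk) ^ 2) wm := by
    exact (hasDerivAt_const wm (wj * wl)).div hmul2 hwmk
  -- compositions with Li2
  have hAe : wm / (mβ * wj) = A := hA.symm
  have hFe : wl / (mα * wm) = F := hF.symm
  have hCe : (wj * wl) / (wm * wk) = C := hC.symm
  have h1 : HasDerivAt (fun w : ℂ => Li2 (w / (mβ * wj)))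
      (-Complex.log (1 - A) / A * (1 / (mβ * wj))) wm := by
    have hd : HasDerivAt Li2 (-Complex.log (1 - A) / A) (wm / (mβ * wj)) := by
      rw [hAe]; exact hasDerivAt_Li2 hAnorm hA0
    exact hd.comp wm hin1
  have h4 : HasDerivAt (fun w : ℂ => Li2 (wl / (mα * w)))
      (-Complex.log (1 - F) / F * ((0 * (mα * wm) - wl * mα) / (mα * wm) ^ 2)) wm := by
    have hd : HasDerivAt Li2 (-Complex.log (1 - F) / F) (wl / (mα * wm)) := by
      rw [hFe]; exact hasDerivAt_Li2 hFnorm hF0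
    exact hd.comp wm hin4
  have h5 : HasDerivAt (fun w : ℂ => Li2 ((wj * wl) / (w * wk)))
      (-Complex.log (1 - C) / C * ((0 * (wm * wk) - (wj * wl) * wk) / (wm * wk) ^ 2)) wm := by
    have hd : HasDerivAt Li2 (-Complex.log (1 - C) / C) ((wj * wl) / (wm * wk)) := by
      rw [hCe]; exact hasDerivAt_Li2 hCnorm hC0
    exact hd.comp wm hin5
  have hlog : HasDerivAt (fun w : ℂ => Complex.log (w / (mβ * wj)))
      (A⁻¹ * (1 / (mβ * wj))) wm := by
    have hd : HasDerivAt Complex.log A⁻¹ (wm / (mβ * wj)) := by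
      rw [hAe]; exact Complex.hasDerivAt_log hslit
    exact hd.comp wm hin1
  have hbig := (((((h1.add_const (Li2 (wk / (mα * wj)))).sub_const
      (Li2 (wl / (mβ * wk)))).sub h4).add h5).sub_const ((Real.pi : ℂ) ^ 2 / 6)).add
      (hlog.mul_const (Complex.log (wk / (mα * wj))))
  have e1 : -Complex.log (1 - A) / A * (1 / (mβ * wj)) = -Complex.log (1 - A) / wm := by
    rw [hA]
    field_simp
  have e4 : -Complex.log (1 - F) / F * ((0 * (mα * wm) - wl * mα) / (mα * wm) ^ 2)
      = Complex.log (1 - F) / wm := by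
    rw [hF]
    field_simp
    ring
  have e5 : -Complex.log (1 - C) / C * ((0 * (wm * wk) - (wj * wl) * wk) / (wm * wk) ^ 2)
      = Complex.log (1 - C) / wm := by
    rw [hC]
    field_simp
    ring
  have elog : A⁻¹ * (1 / (mβ * wj)) = 1 / wm := by
    rw [hA]
    field_simp
  have hDeq : -Complex.log (1 - A) / A * (1 / (mβ * wj)) -
      -Complex.log (1 - F) / F * ((0 * (mα * wm) - wl * mα) / (mα * wm) ^ 2) +
      -Complex.log (1 - C) / C * ((0 * (wm * wk) - (wj * wl) * wk) / (wm * wk) ^ 2) +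
      A⁻¹ * (1 / (mβ * wj)) * Complex.log (wk / (mα * wj)) = D := by
    rw [e1, e4, e5, elog, hD]
    ring
  rw [hDeq] at hbig
  refine ⟨hbig, ?_⟩
  -- the exponential identity
  have hwmD : wm * D = -Complex.log (1 - A) - Complex.log (1 - F) + Complex.log (1 - C)
      + Complex.log (wk / (mα * wj)) := by
    rw [hD]; field_simp
  have hK0 : wk / (mα * wj) ≠ 0 := div_ne_zero hwk (mul_ne_zero hmα hwj)
  rw [hwmD]
  rw [show -Complex.log (1 - A) - Complex.log (1 - F) + Complex.log (1 - C)
      + Complex.log (wk / (mα * wj)) =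
      Complex.log (1 - C) + Complex.log (wk / (mα * wj))
        - Complex.log (1 - A) - Complex.log (1 - F) by ring]
  rw [Complex.exp_sub, Complex.exp_sub, Complex.exp_add,
    Complex.exp_log h1C, Complex.exp_log hK0, Complex.exp_log h1A, Complex.exp_log h1F]
  have hmbwj : mβ * wj ≠ 0 := mul_ne_zero hmβ hwj
  have r1 : 1 - A = (mβ * wj - wm) / (mβ * wj) := by
    rw [hA]; field_simp
  have r2 : 1 - F = (mα * wm - wl) / (mα * wm) := by
    rw [hF]; field_simp
  have r3 : 1 - C = (wm * wk - wj * wl) / (wm * wk) := by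
    rw [hC]; field_simp
  have hn1 : mβ * wj - wm ≠ 0 := by
    intro h
    apply h1A
    rw [r1, h, zero_div]
  have hn2 : mα * wm - wl ≠ 0 := by
    intro h
    apply h1F
    rw [r2, h, zero_div]
  have hden1 : (1 : ℂ) / mβ * wm - wj ≠ 0 := by
    intro h
    apply hn1
    have := mul_eq_zero_of_right mβ h
    rw [mul_sub] at this
    field_simp at this
    linear_combination -this
  rw [div_div, div_eq_div_iff (mul_ne_zero h1A h1F) (mul_ne_zero hden1 hn2)]
  rw [hA, hF, hC]
  field_simp
  ring
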